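/- arXiv:0903.5452 — 2 statements merged into one kernel-verified Lean document; each statement's English description precedes it below -/
import Mathlib

section
/- For ν ∈ [0, 1/2) there is a constant C_ν such that for all t₁, t₂ ∈ ℝ with |t₁ - t₂| ≤ 1, the H^ν(ℝ) Sobolev norm of the difference of indicator functions 1_{[0,t₁]} - 1_{[0,t₂]} is at most C_ν |t₂ - t₁|^{1/2 - ν}. -/
open MeasureTheory Real Set
noncomputable section

/-- Fourier transform with the paper's normalization `𝓕f(ξ) = ∫ e^{-iξx} f(x) dx`. -/
def FT (f : ℝ → ℂ) (ξ : ℝ) : ℂ := ∫ x : ℝ, Complex.exp (-(Complex.I * ξ * x)) * f x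

/-- Square of the `H^s(ℝ)` Sobolev norm. -/
def sobNormSq (s : ℝ) (f : ℝ → ℂ) : ℝ := ∫ τ : ℝ, (1 + τ^2) ^ s * ‖FT f τ‖^2

/-- The `H^s(ℝ)` Sobolev norm. -/
def sobNorm (s : ℝ) (f : ℝ → ℂ) : ℝ := Real.sqrt (sobNormSq s f)

/-- Membership in `H^s(ℝ)`. -/
def MemSob (s : ℝ) (f : ℝ → ℂ) : Prop :=
  MeasureTheory.Integrable (fun τ : ℝ => (1 + τ^2) ^ s * ‖FT f τ‖^2)

/-- Signed indicator `1_{[0,t]}` (for `t < 0`, `-1_{[t,0]}`), so that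
`𝓕(ind t)(τ) = (e^{-iτt} - 1)/(-iτ)`. -/
def ind (t : ℝ) : ℝ → ℂ :=
  fun s => if 0 ≤ t then Set.indicator (Set.Ioc 0 t) (fun _ => (1:ℂ)) s
           else - Set.indicator (Set.Ioc t 0) (fun _ => (1:ℂ)) s

lemma ind_sub_eq {t₁ t₂ : ℝ} (h : t₂ ≤ t₁) :
    (fun s => ind t₁ s - ind t₂ s) = Set.indicator (Set.Ioc t₂ t₁) (fun _ => (1:ℂ)) := by
  by_cases h2 : 0 ≤ t₂
  · have h1 : 0 ≤ t₁ := le_trans h2 h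
    funext s
    simp only [ind, if_pos h1, if_pos h2]
    rw [← Set.Ioc_union_Ioc_eq_Ioc h2 h,
      Set.indicator_union_of_disjoint (Set.Ioc_disjoint_Ioc_of_le le_rfl)]
    ring
  · by_cases h1 : 0 ≤ t₁
    · funext s
      simp only [ind, if_pos h1, if_neg h2, sub_neg_eq_add]
      rw [← Set.Ioc_union_Ioc_eq_Ioc (le_of_lt (lt_of_not_ge h2)) h1,
        Set.indicator_union_of_disjoint (Set.Ioc_disjoint_Ioc_of_le le_rfl)]
      ring
    · funext s
      simp only [ind, if_neg h1, if_neg h2]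
      rw [← Set.Ioc_union_Ioc_eq_Ioc h (le_of_lt (lt_of_not_ge h1)),
        Set.indicator_union_of_disjoint (Set.Ioc_disjoint_Ioc_of_le le_rfl)]
      ring

lemma FT_indicator {a b : ℝ} (hab : a ≤ b) {τ : ℝ} (hτ : τ ≠ 0) :
    FT (Set.indicator (Set.Ioc a b) fun _ => (1:ℂ)) τ
      = (Complex.exp (-(Complex.I * τ) * b) - Complex.exp (-(Complex.I * τ) * a))
          / (-(Complex.I * τ)) := by
  have hc : -(Complex.I * (τ:ℂ)) ≠ 0 := by
    simp [Complex.I_ne_zero, Complex.ofReal_ne_zero, hτ]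
  have h1 : (fun x : ℝ => Complex.exp (-(Complex.I * τ * x))
        * (Set.indicator (Set.Ioc a b) (fun _ => (1:ℂ)) x))
      = Set.indicator (Set.Ioc a b) (fun x : ℝ => Complex.exp (-(Complex.I * τ) * x)) := by
    funext x
    by_cases hx : x ∈ Set.Ioc a b
    · simp only [Set.indicator_of_mem hx, mul_one]
      ring_nf
    · simp [Set.indicator_of_notMem hx]
  rw [FT, h1, MeasureTheory.integral_indicator measurableSet_Ioc,
      ← intervalIntegral.integral_of_le hab, integral_exp_mul_complex hc]

lemma norm_exp_neg_I_mul (τ c : ℝ) : ‖Complex.exp (-(Complex.I * τ) * c)‖ = 1 := by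
  have h : -(Complex.I * (τ:ℂ)) * (c:ℂ) = ((-(τ * c) : ℝ) : ℂ) * Complex.I := by
    push_cast; ring
  rw [h, Complex.norm_exp_ofReal_mul_I]

lemma norm_FT_le_len {a b : ℝ} (hab : a ≤ b) (τ : ℝ) :
    ‖FT (Set.indicator (Set.Ioc a b) fun _ => (1:ℂ)) τ‖ ≤ b - a := by
  have h1 : (fun x : ℝ => Complex.exp (-(Complex.I * τ * x))
        * (Set.indicator (Set.Ioc a b) (fun _ => (1:ℂ)) x))
      = Set.indicator (Set.Ioc a b) (fun x : ℝ => Complex.exp (-(Complex.I * τ * x))) := by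
    funext x
    by_cases hx : x ∈ Set.Ioc a b <;> simp [hx]
  rw [FT, h1, MeasureTheory.integral_indicator measurableSet_Ioc]
  calc ‖∫ x in Set.Ioc a b, Complex.exp (-(Complex.I * τ * x))‖
      ≤ ∫ x in Set.Ioc a b, ‖Complex.exp (-(Complex.I * τ * x))‖ :=
        norm_integral_le_integral_norm _
    _ = ∫ _x in Set.Ioc a b, (1:ℝ) := by
        refine integral_congr_ae (Filter.Eventually.of_forall fun x => ?_)
        show ‖Complex.exp (-(Complex.I * τ * x))‖ = 1
        have h : -(Complex.I * (τ:ℂ) * (x:ℂ)) = -(Complex.I * (τ:ℂ)) * (x:ℂ) := by ring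
        rw [h, norm_exp_neg_I_mul]
    _ = b - a := by
        simp [Real.volume_Ioc, ENNReal.toReal_ofReal (by linarith : (0:ℝ) ≤ b - a), hab]

lemma norm_FT_le_two {a b : ℝ} (hab : a ≤ b) {τ : ℝ} (hτ : τ ≠ 0) :
    ‖FT (Set.indicator (Set.Ioc a b) fun _ => (1:ℂ)) τ‖ ≤ 2 / |τ| := by
  rw [FT_indicator hab hτ, norm_div]
  have hden : ‖-(Complex.I * (τ:ℂ))‖ = |τ| := by
    simp [Complex.norm_real]
  rw [hden]
  gcongr
  calc ‖Complex.exp (-(Complex.I * τ) * b) - Complex.exp (-(Complex.I * τ) * a)‖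
      ≤ ‖Complex.exp (-(Complex.I * τ) * b)‖ + ‖Complex.exp (-(Complex.I * τ) * a)‖ :=
        norm_sub_le _ _
    _ = 2 := by rw [norm_exp_neg_I_mul, norm_exp_neg_I_mul]; norm_num

lemma key_bound {ν : ℝ} (hν0 : 0 ≤ ν) (hν1 : ν < 1/2) {a b : ℝ} (hab : a ≤ b)
    (hb1 : b - a ≤ 1) :
    sobNormSq ν (Set.indicator (Set.Ioc a b) fun _ => (1:ℂ))
      ≤ (2 ^ ((4:ℝ) - ν) * ∫ u : ℝ, (1 + |u|) ^ (-(2 - 2*ν))) * (b - a) ^ (1 - 2*ν) := by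
  rcases eq_or_lt_of_le hab with rfl | hlt
  · have hFT : ∀ τ : ℝ, FT (Set.indicator (Set.Ioc a a) fun _ => (1:ℂ)) τ = 0 := by
      intro τ; simp [FT, Set.Ioc_self]
    have h0 : sobNormSq ν (Set.indicator (Set.Ioc a a) fun _ => (1:ℂ)) = 0 := by
      simp [sobNormSq, FT, Set.Ioc_self]
    rw [h0, sub_self, Real.zero_rpow (by linarith : (1:ℝ) - 2*ν ≠ 0), mul_zero]
  · set δ : ℝ := b - a with hδdef
    have hδ : 0 < δ := by simp [hδdef]; linarith
    set r : ℝ := 2 - 2*ν with hrdef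
    have hr1 : (1:ℝ) < r := by rw [hrdef]; linarith
    set ι : ℝ → ℂ := Set.indicator (Set.Ioc a b) fun _ => (1:ℂ) with hι
    set G : ℝ → ℝ := fun u => (1 + |u|) ^ (-r) with hG
    have hGint : Integrable G := by
      have := integrable_one_add_norm (E := ℝ) (μ := volume) (r := r)
        (by simpa using hr1)
      simpa [hG, Real.norm_eq_abs] using this
    have hGnn : ∀ u, 0 ≤ G u := fun u => Real.rpow_nonneg (by positivity) _
    set K : ℝ := ∫ u : ℝ, G u with hK
    set c : ℝ := 2 ^ ((4:ℝ) - ν) with hc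
    set M : ℝ → ℝ := fun τ => c * δ ^ (2 - 2*ν) * G (δ * τ) with hM
    have hMint : Integrable M := (hGint.comp_mul_left' hδ.ne').const_mul _
    -- pointwise bound
    have hne : ∀ᵐ τ : ℝ, τ ≠ 0 := by
      refine ae_iff.2 ?_
      simpa using Real.volume_singleton (x := 0)
    have hpt : ∀ᵐ τ : ℝ, (1 + τ^2) ^ ν * ‖FT ι τ‖^2 ≤ M τ := by
      refine hne.mono fun τ hτ => ?_
      have hτa : (0:ℝ) < |τ| := abs_pos.2 hτ
      set n : ℝ := ‖FT ι τ‖ with hn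
      have hn0 : 0 ≤ n := norm_nonneg _
      have hn1 : n ≤ δ := norm_FT_le_len hab τ
      have hn2 : n ≤ 2 / |τ| := norm_FT_le_two hab hτ
      have hP : (0:ℝ) < 1 + δ^2 * τ^2 := by positivity
      set P : ℝ := 1 + δ^2 * τ^2 with hPdef
      have step1 : n^2 * P ≤ 8 * δ^2 := by
        rcases le_or_gt (δ^2 * τ^2) 1 with hcase | hcase
        · nlinarith
        · have hnτ : n * |τ| ≤ 2 := by
            rw [le_div_iff₀ hτa] at hn2; exact hn2
          have hsq : n^2 * τ^2 ≤ 4 := by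
            have h := mul_le_mul hnτ hnτ (mul_nonneg hn0 (abs_nonneg τ)) (by norm_num)
            calc n^2 * τ^2 = (n * |τ|) * (n * |τ|) := by rw [← sq_abs τ]; ring
              _ ≤ 2 * 2 := h
              _ = 4 := by norm_num
          nlinarith [sq_nonneg n]
      have hδ2 : (0:ℝ) < δ^2 := by positivity
      set Q : ℝ := 1 + δ * |τ| with hQdef
      have hQ0 : (0:ℝ) < Q := by positivity
      have hQ2 : Q^2 ≤ 2 * P := by
        have := sq_abs τ
        nlinarith [sq_nonneg (δ * |τ| - 1)]
      have e1 : (1 + τ^2) ^ ν ≤ (δ^2) ^ (-ν) * P ^ ν := by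
        rw [Real.rpow_neg hδ2.le, inv_mul_eq_div, le_div_iff₀ (Real.rpow_pos_of_pos hδ2 ν)]
        calc (1 + τ^2) ^ ν * (δ^2) ^ ν = (δ^2 * (1 + τ^2)) ^ ν := by
              rw [← Real.mul_rpow (by positivity) hδ2.le]; ring_nf
          _ ≤ P ^ ν := by
              apply Real.rpow_le_rpow (by positivity) ?_ hν0
              have hδ1 : δ ≤ 1 := by rw [hδdef]; linarith
              nlinarith [sq_nonneg τ]
      have hkey : P ^ (ν - 1) ≤ 2 ^ (1 - ν) * (Q^2) ^ (ν - 1) := by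
        have h1 : (2 * P) ^ (ν - 1) ≤ (Q^2) ^ (ν - 1) :=
          Real.rpow_le_rpow_of_nonpos (by positivity) hQ2 (by linarith)
        rw [Real.mul_rpow (by norm_num) hP.le] at h1
        calc P ^ (ν - 1) = 2 ^ (1 - ν) * (2 ^ (ν - 1) * P ^ (ν - 1)) := by
              rw [← mul_assoc, ← Real.rpow_add two_pos]; norm_num
          _ ≤ 2 ^ (1 - ν) * (Q^2) ^ (ν - 1) :=
              mul_le_mul_of_nonneg_left h1 (Real.rpow_nonneg (by norm_num) _)
      calc (1 + τ^2) ^ ν * n^2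
          ≤ ((δ^2) ^ (-ν) * P ^ ν) * (8 * δ^2 / P) := by
            apply mul_le_mul e1 ?_ (sq_nonneg n) (by positivity)
            rw [le_div_iff₀ hP]; exact step1
        _ = 8 * δ^2 * (δ^2) ^ (-ν) * P ^ (ν - 1) := by
            rw [Real.rpow_sub hP, Real.rpow_one]
            field_simp
        _ ≤ 8 * δ^2 * (δ^2) ^ (-ν) * (2 ^ (1 - ν) * (Q^2) ^ (ν - 1)) := by
            refine mul_le_mul_of_nonneg_left hkey (by positivity)
        _ = M τ := by
            have hQeq : (1 + |δ * τ|) = Q := by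
              rw [hQdef, abs_mul, abs_of_pos hδ]
            have hQpow : (Q^2) ^ (ν - 1) = Q ^ (-r) := by
              rw [← Real.rpow_natCast Q 2, ← Real.rpow_mul hQ0.le]
              congr 1
              rw [hrdef]; push_cast; ring
            have hδpow : δ^2 * (δ^2) ^ (-ν) = δ ^ (2 - 2*ν) := by
              rw [← Real.rpow_natCast δ 2, ← Real.rpow_mul hδ.le, ← Real.rpow_add hδ]
              congr 1; push_cast; ring
            have h8 : (8:ℝ) * 2 ^ (1 - ν) = c := by
              rw [hc, show (8:ℝ) = 2 ^ ((3:ℝ)) by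
                    rw [show ((3:ℝ)) = ((3:ℕ):ℝ) by norm_num, Real.rpow_natCast]; norm_num,
                ← Real.rpow_add two_pos]
              congr 1; ring
            rw [hM]
            simp only [hG]
            rw [abs_mul, abs_of_pos hδ, ← hQdef, hQpow, ← h8, ← hδpow]
            ring
    have hnn : ∀ᵐ τ : ℝ, 0 ≤ (1 + τ^2) ^ ν * ‖FT ι τ‖^2 :=
      Filter.Eventually.of_forall fun τ => by positivity
    have hmono : sobNormSq ν ι ≤ ∫ τ : ℝ, M τ :=
      integral_mono_of_nonneg hnn hMint hpt
    have hMval : ∫ τ : ℝ, M τ = c * δ ^ (2 - 2*ν) * (δ⁻¹ * K) := by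
      rw [hM]
      rw [show (∫ τ : ℝ, (fun τ => c * δ ^ (2 - 2*ν) * G (δ * τ)) τ)
            = ∫ τ : ℝ, (c * δ ^ (2 - 2*ν)) * G (δ * τ) from rfl]
      rw [MeasureTheory.integral_const_mul]
      rw [MeasureTheory.Measure.integral_comp_mul_left G δ]
      rw [smul_eq_mul, abs_inv, abs_of_pos hδ, hK]
    have hfin : c * δ ^ (2 - 2*ν) * (δ⁻¹ * K) = (c * K) * δ ^ (1 - 2*ν) := by
      rw [← Real.rpow_neg_one δ, ← mul_assoc]
      rw [show c * δ ^ (2 - 2*ν) * δ ^ (-1:ℝ) = c * (δ ^ (2 - 2*ν) * δ ^ (-1:ℝ)) by ring,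
        ← Real.rpow_add hδ]
      rw [show (2 - 2*ν) + (-1:ℝ) = 1 - 2*ν by ring]
      ring
    calc sobNormSq ν ι ≤ ∫ τ : ℝ, M τ := hmono
      _ = (c * K) * δ ^ (1 - 2*ν) := by rw [hMval, hfin]

theorem indicator_difference_sobolev_bound (ν : ℝ) (hν : ν ∈ Set.Ico (0:ℝ) (1/2)) :
    ∃ C : ℝ, 0 < C ∧ ∀ t₁ t₂ : ℝ, |t₁ - t₂| ≤ 1 →
      sobNorm ν (fun s => ind t₁ s - ind t₂ s) ≤ C * |t₂ - t₁| ^ ((1:ℝ)/2 - ν) := by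
  obtain ⟨hν0, hν1⟩ := hν
  set c : ℝ := 2 ^ ((4:ℝ) - ν) with hc
  set K : ℝ := ∫ u : ℝ, (1 + |u|) ^ (-(2 - 2*ν)) with hK
  have hKnn : 0 ≤ K := integral_nonneg fun u => Real.rpow_nonneg (by positivity) _
  have hcK : 0 ≤ c * K := mul_nonneg (Real.rpow_nonneg (by norm_num) _) hKnn
  refine ⟨Real.sqrt (c * K) + 1, by positivity, ?_⟩
  intro t₁ t₂ hdist
  set a : ℝ := min t₁ t₂ with ha
  set b : ℝ := max t₁ t₂ with hb
  have hab : a ≤ b := min_le_max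
  have hba : b - a = |t₂ - t₁| := by
    rw [ha, hb, max_sub_min_eq_abs, abs_sub_comm]
  have hb1 : b - a ≤ 1 := by rw [hba, abs_sub_comm]; exact hdist
  set ι : ℝ → ℂ := Set.indicator (Set.Ioc a b) fun _ => (1:ℂ) with hι
  have hFTeq : ∀ τ : ℝ, ‖FT (fun s => ind t₁ s - ind t₂ s) τ‖ = ‖FT ι τ‖ := by
    intro τ
    rcases le_total t₂ t₁ with h | h
    · rw [hι, show a = t₂ from min_eq_right h, show b = t₁ from max_eq_left h,
        ind_sub_eq h]
    · rw [hι, show a = t₁ from min_eq_left h, show b = t₂ from max_eq_right h]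
      have hneg : (fun s => ind t₁ s - ind t₂ s)
          = fun s => -((Set.indicator (Set.Ioc t₁ t₂) fun _ => (1:ℂ)) s) := by
        rw [← ind_sub_eq h]; funext s; ring
      rw [hneg]
      have hFTneg : FT (fun s => -((Set.indicator (Set.Ioc t₁ t₂) fun _ => (1:ℂ)) s)) τ
          = - FT (Set.indicator (Set.Ioc t₁ t₂) fun _ => (1:ℂ)) τ := by
        rw [FT, FT, ← integral_neg]
        congr 1; funext x; ring
      rw [hFTneg, norm_neg]
  have hsq : sobNormSq ν (fun s => ind t₁ s - ind t₂ s) = sobNormSq ν ι := by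
    rw [sobNormSq, sobNormSq]
    congr 1; funext τ; rw [hFTeq τ]
  have hkey := key_bound hν0 hν1 hab hb1
  rw [sobNorm, hsq]
  calc Real.sqrt (sobNormSq ν ι)
      ≤ Real.sqrt ((c * K) * (b - a) ^ (1 - 2*ν)) := Real.sqrt_le_sqrt hkey
    _ = Real.sqrt (c * K) * Real.sqrt ((b - a) ^ (1 - 2*ν)) := Real.sqrt_mul hcK _
    _ = Real.sqrt (c * K) * (b - a) ^ ((1:ℝ)/2 - ν) := by
        rw [show Real.sqrt ((b - a) ^ (1 - 2*ν)) = ((b - a) ^ (1 - 2*ν)) ^ ((1:ℝ)/2) from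
              Real.sqrt_eq_rpow _,
          ← Real.rpow_mul (by linarith : (0:ℝ) ≤ b - a)]
        congr 1; ring
    _ ≤ (Real.sqrt (c * K) + 1) * (b - a) ^ ((1:ℝ)/2 - ν) := by
        apply mul_le_mul_of_nonneg_right (by linarith) ?_
        exact Real.rpow_nonneg (by linarith) _
    _ = (Real.sqrt (c * K) + 1) * |t₂ - t₁| ^ ((1:ℝ)/2 - ν) := by rw [hba]
end
end

section
/- The map t ↦ 1_{[0,t]} from [0,∞) to H^ν(ℝ) is continuous for every ν < 1/2. -/
open MeasureTheory Real Set
noncomputable section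

lemma ind_integrable (τ t : ℝ) (ht : 0 ≤ t) :
    Integrable (fun x : ℝ => Complex.exp (-(Complex.I * τ * x)) * ind t x) := by
  have : (fun x : ℝ => Complex.exp (-(Complex.I * τ * x)) * ind t x)
      = Set.indicator (Set.Ioc 0 t) (fun x : ℝ => Complex.exp (-(Complex.I * τ * x))) := by
    funext x
    simp only [ind, if_pos ht, Set.indicator_apply]
    split <;> simp
  rw [this, integrable_indicator_iff measurableSet_Ioc]
  exact (Complex.continuous_exp.comp (by fun_prop)).integrableOn_Ioc

lemma FT_ind (τ t : ℝ) (ht : 0 ≤ t) :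
    FT (ind t) τ = ∫ x in (0:ℝ)..t, Complex.exp (-(Complex.I * τ * x)) := by
  have : (fun x : ℝ => Complex.exp (-(Complex.I * τ * x)) * ind t x)
      = Set.indicator (Set.Ioc 0 t) (fun x : ℝ => Complex.exp (-(Complex.I * τ * x))) := by
    funext x
    simp only [ind, if_pos ht, Set.indicator_apply]
    split <;> simp
  rw [FT, this, integral_indicator measurableSet_Ioc, intervalIntegral.integral_of_le ht]

lemma FT_diff (τ t t₀ : ℝ) (ht : 0 ≤ t) (ht₀ : 0 ≤ t₀) :
    FT (fun s => ind t s - ind t₀ s) τ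
      = ∫ x in t₀..t, Complex.exp (-(Complex.I * τ * x)) := by
  have h1 : FT (fun s => ind t s - ind t₀ s) τ = FT (ind t) τ - FT (ind t₀) τ := by
    rw [FT, FT, FT, ← integral_sub (ind_integrable τ t ht) (ind_integrable τ t₀ ht₀)]
    congr 1; funext x; ring
  have hc : ∀ a b : ℝ, IntervalIntegrable (fun x : ℝ => Complex.exp (-(Complex.I * τ * x)))
      volume a b := fun a b => (Complex.continuous_exp.comp (by fun_prop)).intervalIntegrable a b
  rw [h1, FT_ind τ t ht, FT_ind τ t₀ ht₀,
    ← intervalIntegral.integral_add_adjacent_intervals (hc 0 t₀) (hc t₀ t)]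
  ring

lemma bound1 (τ t t₀ : ℝ) :
    ‖∫ x in t₀..t, Complex.exp (-(Complex.I * τ * x))‖ ≤ |t - t₀| := by
  have := intervalIntegral.norm_integral_le_of_norm_le_const (C := 1)
    (f := fun x : ℝ => Complex.exp (-(Complex.I * τ * x))) (a := t₀) (b := t) ?_
  · simpa using this
  · intro x hx
    simp [Complex.norm_exp]

lemma bound2 (τ t t₀ : ℝ) (hτ : τ ≠ 0) :
    ‖∫ x in t₀..t, Complex.exp (-(Complex.I * τ * x))‖ ≤ 2 / |τ| := by
  have hrw : (fun x : ℝ => Complex.exp (-(Complex.I * τ * x)))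
      = fun x : ℝ => Complex.exp ((-(Complex.I * τ)) * x) := by
    funext x; ring_nf
  have hc : (-(Complex.I * τ)) ≠ 0 := by
    simp [Complex.ext_iff, hτ]
  rw [hrw, integral_exp_mul_complex hc]
  rw [norm_div]
  have h1 : ‖Complex.exp (-(Complex.I * τ) * t) - Complex.exp (-(Complex.I * τ) * t₀)‖ ≤ 2 := by
    refine (norm_sub_le _ _).trans ?_
    have e1 : ‖Complex.exp (-(Complex.I * τ) * t)‖ = 1 := by
      simp [Complex.norm_exp]
    have e2 : ‖Complex.exp (-(Complex.I * τ) * t₀)‖ = 1 := by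
      simp [Complex.norm_exp]
    rw [e1, e2]; norm_num
  have h2 : ‖(-(Complex.I * τ) : ℂ)‖ = |τ| := by
    simp
  rw [h2]
  exact div_le_div_of_nonneg_right h1 (abs_pos.mpr hτ).le

lemma G_integrable (ν : ℝ) (hν : ν < 1/2) :
    Integrable (fun τ : ℝ => 8 * (1 + τ^2) ^ (ν - 1)) (volume : Measure ℝ) := by
  have h : (Module.finrank ℝ ℝ : ℝ) < 2 * (1 - ν) := by
    simp [Module.finrank_self]; linarith
  have := (integrable_rpow_neg_one_add_norm_sq (E := ℝ) (μ := volume) h).const_mul (8:ℝ)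
  refine this.congr (Filter.Eventually.of_forall fun x => ?_)
  have : -(2 * (1 - ν)) / 2 = ν - 1 := by ring
  simp [Real.norm_eq_abs, sq_abs, this]


lemma hae0 : ∀ᵐ τ : ℝ, τ ≠ (0:ℝ) := by
  rw [MeasureTheory.ae_iff]
  simpa [ne_eq, not_not, Set.setOf_eq_eq_singleton] using measure_singleton (0:ℝ)

theorem indicator_map_continuous_into_Hnu (ν : ℝ) (hν : ν < 1/2) (t₀ : ℝ) (ht₀ : 0 ≤ t₀) :
    Filter.Tendsto (fun t : ℝ => sobNorm ν (fun s => ind t s - ind t₀ s))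
      (nhdsWithin t₀ (Set.Ici 0)) (nhds 0) := by
  set l := nhdsWithin t₀ (Set.Ici 0) with hl
  have hmem : ∀ᶠ t in l, t ∈ Set.Ici (0:ℝ) := self_mem_nhdsWithin
  have hclose : ∀ᶠ t in l, |t - t₀| ≤ 1 := by
    have : Metric.closedBall t₀ 1 ∈ nhds t₀ := Metric.closedBall_mem_nhds t₀ one_pos
    filter_upwards [nhdsWithin_le_nhds this] with t ht
    simpa [Metric.mem_closedBall, Real.dist_eq] using ht
  have h0 : Filter.Tendsto (fun t : ℝ => sobNormSq ν (fun s => ind t s - ind t₀ s))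
      l (nhds 0) := by
    have key := MeasureTheory.tendsto_integral_filter_of_dominated_convergence
      (μ := (volume : Measure ℝ)) (l := l)
      (F := fun t τ => (1 + τ^2) ^ ν * ‖FT (fun s => ind t s - ind t₀ s) τ‖^2)
      (f := fun _ : ℝ => (0:ℝ))
      (fun τ : ℝ => 8 * (1 + τ^2) ^ (ν - 1))
      ?_ ?_ (G_integrable ν hν) ?_
    · simpa [sobNormSq] using key
    · -- measurability
      filter_upwards [hmem] with t ht
      have heq : ∀ᵐ τ : ℝ, (fun τ : ℝ => (1 + τ^2) ^ ν *
            ‖(Complex.exp (-(Complex.I * τ) * t) - Complex.exp (-(Complex.I * τ) * t₀)) /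
              (-(Complex.I * τ))‖^2) τ
          = (1 + τ^2) ^ ν * ‖FT (fun s => ind t s - ind t₀ s) τ‖^2 := by
        filter_upwards [hae0] with τ hτ
        have hrw : (fun x : ℝ => Complex.exp (-(Complex.I * τ * x)))
            = fun x : ℝ => Complex.exp ((-(Complex.I * τ)) * x) := by
          funext x; ring_nf
        have hc : (-(Complex.I * (τ:ℂ))) ≠ 0 := by
          simp [Complex.ext_iff, hτ]
        rw [FT_diff τ t t₀ ht ht₀, hrw, integral_exp_mul_complex hc]
      refine MeasureTheory.AEStronglyMeasurable.congr ?_ heq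
      apply Measurable.aestronglyMeasurable
      fun_prop
    · -- bound
      filter_upwards [hmem, hclose] with t ht htc
      filter_upwards [hae0] with τ hτ
      have hpos : (0:ℝ) < 1 + τ^2 := by positivity
      have hb : ‖FT (fun s => ind t s - ind t₀ s) τ‖^2 ≤ 8 / (1 + τ^2) := by
        rw [FT_diff τ t t₀ ht ht₀]
        rcases le_or_gt (τ^2) 1 with h | h
        · calc ‖∫ x in t₀..t, Complex.exp (-(Complex.I * τ * x))‖^2
              ≤ |t - t₀|^2 := pow_le_pow_left₀ (norm_nonneg _) (bound1 τ t t₀) 2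
            _ ≤ 1 := by nlinarith [abs_nonneg (t - t₀)]
            _ ≤ 8 / (1 + τ^2) := by rw [le_div_iff₀ hpos]; nlinarith
        · calc ‖∫ x in t₀..t, Complex.exp (-(Complex.I * τ * x))‖^2
              ≤ (2 / |τ|)^2 := pow_le_pow_left₀ (norm_nonneg _) (bound2 τ t t₀ hτ) 2
            _ = 4 / τ^2 := by rw [div_pow, sq_abs]; norm_num
            _ ≤ 8 / (1 + τ^2) := by
                rw [div_le_div_iff₀ (by positivity) hpos]; nlinarith
      have hnn : (0:ℝ) ≤ (1 + τ^2) ^ ν * ‖FT (fun s => ind t s - ind t₀ s) τ‖^2 := by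
        positivity
      rw [Real.norm_eq_abs, abs_of_nonneg hnn]
      calc (1 + τ^2) ^ ν * ‖FT (fun s => ind t s - ind t₀ s) τ‖^2
          ≤ (1 + τ^2) ^ ν * (8 / (1 + τ^2)) :=
            mul_le_mul_of_nonneg_left hb (Real.rpow_nonneg hpos.le ν)
        _ = 8 * (1 + τ^2) ^ (ν - 1) := by
            rw [Real.rpow_sub hpos, Real.rpow_one]; ring
    · -- pointwise limit
      refine Filter.Eventually.of_forall fun τ => ?_
      have hpos : (0:ℝ) < 1 + τ^2 := by positivity
      refine squeeze_zero' (g := fun t : ℝ => (1 + τ^2) ^ ν * (t - t₀)^2) ?_ ?_ ?_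
      · filter_upwards with t; positivity
      · filter_upwards [hmem] with t ht
        calc (1 + τ^2) ^ ν * ‖FT (fun s => ind t s - ind t₀ s) τ‖^2
            ≤ (1 + τ^2) ^ ν * |t - t₀|^2 := by
              rw [FT_diff τ t t₀ ht ht₀]
              exact mul_le_mul_of_nonneg_left
                (pow_le_pow_left₀ (norm_nonneg _) (bound1 τ t t₀) 2)
                (Real.rpow_nonneg hpos.le ν)
          _ = (1 + τ^2) ^ ν * (t - t₀)^2 := by rw [sq_abs]
      · have hc : Filter.Tendsto (fun t : ℝ => (1 + τ^2) ^ ν * (t - t₀)^2)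
            (nhds t₀) (nhds ((1 + τ^2) ^ ν * (t₀ - t₀)^2)) := by
          apply Continuous.tendsto; continuity
        simpa using hc.mono_left nhdsWithin_le_nhds
  have hs := (Real.continuous_sqrt.tendsto 0).comp h0
  simpa [sobNorm, Function.comp_def] using hs
end
end
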